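/- Let A_F be the set of maximizers over A of U_F and A_P the set of maximizers over A of U_0 (both nonempty since U_F and U_0 are continuous on the compact interval A). Under Assumption 1 (ranked incentives), if r(a_F) ≻_AI r(a₀) for every a_F ∈ A_F, then for every a_F ∈ A_F and every a_P ∈ A_P one has r(a_P) ≽_AI r(a_F); that is, ∂₁u_A(a, r(a_F)) ≤ ∂₁u_A(a, r(a_P)) for all a ∈ A (incentive attenuation under robust implementation). -/

import Mathlib

open MeasureTheory Set

/-- `r₁ ≽_AI r₂`: `r₁` weakly dominates `r₂` in the order of agent incentives, where
`d1 a r` denotes the partial derivative `∂₁u_A(a,r)`. -/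
def succeqAI (d1 : ℝ → ℝ → ℝ) (A : Set ℝ) (r1 r2 : ℝ) : Prop :=
  ∀ a ∈ A, d1 a r2 ≤ d1 a r1

/-- `r₁ ≻_AI r₂`: strict dominance in the order of agent incentives. -/
def succAI (d1 : ℝ → ℝ → ℝ) (A : Set ℝ) (r1 r2 : ℝ) : Prop :=
  succeqAI d1 A r1 r2 ∧ ¬ succeqAI d1 A r2 r1

/-- Assumption 1 (ranked incentives): `≽_AI` is complete on `R`, and strict dominance gives
strictly higher agent incentives everywhere. -/
def RankedIncentives (d1 : ℝ → ℝ → ℝ) (A R : Set ℝ) : Prop :=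
  (∀ r1 ∈ R, ∀ r2 ∈ R, succeqAI d1 A r1 r2 ∨ succeqAI d1 A r2 r1) ∧
  (∀ r1 ∈ R, ∀ r2 ∈ R, succAI d1 A r1 r2 → ∀ a ∈ A, d1 a r2 < d1 a r1)

/-- The robust (full-implementation) value of inducing the pure outcome `a`:
`U_F(a) = u_P(a,r(a)) + ∫_{a₀}^{a} min(max_{a'' ∈ [a₀,a']} ∂₁u_A(a',r(a'')), ∂₁u_A(a',r(a))) da'`. -/
noncomputable def UFval (d1 uP : ℝ → ℝ → ℝ) (rBR : ℝ → ℝ) (a0 a : ℝ) : ℝ :=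
  uP a (rBR a) +
    ∫ a' in a0..a,
      min (sSup ((fun a'' => d1 a' (rBR a'')) '' Set.Icc a0 a')) (d1 a' (rBR a))

/-- The partial-implementation value of inducing the pure outcome `a`:
`U_0(a) = u_P(a,r(a)) + ∫_{a₀}^{a} ∂₁u_A(a',r(a)) da'`. -/
noncomputable def U0val (d1 uP : ℝ → ℝ → ℝ) (rBR : ℝ → ℝ) (a0 a : ℝ) : ℝ :=
  uP a (rBR a) + ∫ a' in a0..a, d1 a' (rBR a)

open Filter Topology

section Aux

private lemma aux_d1_cont (uA : ℝ → ℝ → ℝ) (huA : ContDiff ℝ 2 fun p : ℝ × ℝ => uA p.1 p.2)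
    (d1 : ℝ → ℝ → ℝ) (hd1 : ∀ a r : ℝ, HasDerivAt (fun x => uA x r) (d1 a r) a) :
    Continuous fun p : ℝ × ℝ => d1 p.1 p.2 := by
  have hdiff : Differentiable ℝ (fun p : ℝ × ℝ => uA p.1 p.2) := huA.differentiable two_ne_zero
  have heq : ∀ a r : ℝ, d1 a r = fderiv ℝ (fun p : ℝ × ℝ => uA p.1 p.2) (a, r) (1, 0) := by
    intro a r
    have h1 : HasDerivAt (fun x : ℝ => (x, r)) ((1 : ℝ), (0 : ℝ)) a :=
      HasDerivAt.prodMk (hasDerivAt_id a) (hasDerivAt_const a r)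
    have h2 := (hdiff (a, r)).hasFDerivAt.comp_hasDerivAt a h1
    exact (hd1 a r).unique h2
  have hcont : Continuous fun p : ℝ × ℝ =>
      fderiv ℝ (fun p : ℝ × ℝ => uA p.1 p.2) p (1, 0) :=
    (huA.continuous_fderiv two_ne_zero).clm_apply continuous_const
  have : (fun p : ℝ × ℝ => d1 p.1 p.2)
      = fun p : ℝ × ℝ => fderiv ℝ (fun p : ℝ × ℝ => uA p.1 p.2) p (1, 0) :=
    funext fun p => heq p.1 p.2
  rw [this]; exact hcont

private lemma aux_argmax_cont {a0 abar rlo rhi : ℝ} (uO : ℝ → ℝ → ℝ)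
    (hc : Continuous fun p : ℝ × ℝ => uO p.1 p.2) (rBR : ℝ → ℝ)
    (hrBR : ∀ a ∈ Set.Icc a0 abar, rBR a ∈ Set.Icc rlo rhi ∧
      ∀ r' ∈ Set.Icc rlo rhi, r' ≠ rBR a → uO a r' < uO a (rBR a)) :
    ContinuousOn rBR (Set.Icc a0 abar) := by
  intro a ha
  have hmax : ∀ b ∈ Set.Icc a0 abar, ∀ r' ∈ Set.Icc rlo rhi, uO b r' ≤ uO b (rBR b) := by
    intro b hb r' hr'
    rcases eq_or_ne r' (rBR b) with rfl | hne
    · exact le_rfl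
    · exact ((hrBR b hb).2 r' hr' hne).le
  show Filter.Tendsto rBR (nhdsWithin a (Set.Icc a0 abar)) (nhds (rBR a))
  rw [Filter.tendsto_iff_seq_tendsto]
  intro x hx
  have hxA : ∀ᶠ n in atTop, x n ∈ Set.Icc a0 abar := hx.eventually_mem self_mem_nhdsWithin
  have hxa : Filter.Tendsto x atTop (nhds a) := hx.mono_right nhdsWithin_le_nhds
  apply Filter.tendsto_of_subseq_tendsto
  intro ns hns
  set y : ℕ → ℝ := fun n => if x (ns n) ∈ Set.Icc a0 abar then rBR (x (ns n)) else rBR a with hy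
  have hyR : ∀ n, y n ∈ Set.Icc rlo rhi := by
    intro n
    by_cases h : x (ns n) ∈ Set.Icc a0 abar
    · rw [hy]; simp only [if_pos h]; exact (hrBR _ h).1
    · rw [hy]; simp only [if_neg h]; exact (hrBR a ha).1
  obtain ⟨r', hr'R, φ, hφ, hconv⟩ := isCompact_Icc.tendsto_subseq hyR
  refine ⟨φ, ?_⟩
  have hev : ∀ᶠ n in atTop, x (ns (φ n)) ∈ Set.Icc a0 abar :=
    (hns.comp hφ.tendsto_atTop).eventually hxA
  have heq : (y ∘ φ) =ᶠ[atTop] fun n => rBR (x (ns (φ n))) :=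
    hev.mono fun n h => by simp only [hy, Function.comp_apply, if_pos h]
  have hconv' : Tendsto (fun n => rBR (x (ns (φ n)))) atTop (𝓝 r') := hconv.congr' heq
  have hxto : Tendsto (fun n => x (ns (φ n))) atTop (𝓝 a) := hxa.comp (hns.comp hφ.tendsto_atTop)
  have hkey : ∀ s ∈ Set.Icc rlo rhi, uO a s ≤ uO a r' := by
    intro s hs
    have h1 : Tendsto (fun n => uO (x (ns (φ n))) (rBR (x (ns (φ n))))) atTop (𝓝 (uO a r')) :=
      (hc.tendsto (a, r')).comp (hxto.prodMk_nhds hconv')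
    have h2 : Tendsto (fun n => uO (x (ns (φ n))) s) atTop (𝓝 (uO a s)) :=
      (hc.tendsto (a, s)).comp (hxto.prodMk_nhds tendsto_const_nhds)
    exact le_of_tendsto_of_tendsto h2 h1 (hev.mono fun n hn => hmax _ hn s hs)
  have hr'eq : r' = rBR a := by
    by_contra hne
    have hlt := (hrBR a ha).2 r' hr'R hne
    have := hkey (rBR a) (hrBR a ha).1
    linarith
  rw [hr'eq] at hconv'
  exact hconv'

private lemma aux_sSup_cont {a0 abar : ℝ} (hab : a0 ≤ abar) (h : ℝ → ℝ → ℝ)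
    (hh : ContinuousOn (fun p : ℝ × ℝ => h p.1 p.2) (Set.Icc a0 abar ×ˢ Set.Icc a0 abar)) :
    ContinuousOn (fun a => sSup (h a '' Set.Icc a0 a)) (Set.Icc a0 abar) := by
  have hcont1 : ∀ t ∈ Set.Icc a0 abar, ContinuousOn (h t) (Set.Icc a0 t) := by
    intro t ht
    refine hh.comp ((continuous_const.prodMk continuous_id).continuousOn) ?_
    intro r hr
    exact Set.mk_mem_prod ht ⟨hr.1, hr.2.trans ht.2⟩
  have hne : ∀ t ∈ Set.Icc a0 abar, (h t '' Set.Icc a0 t).Nonempty :=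
    fun t ht => ⟨h t a0, Set.mem_image_of_mem _ (Set.left_mem_Icc.2 ht.1)⟩
  have hbdd : ∀ t ∈ Set.Icc a0 abar, BddAbove (h t '' Set.Icc a0 t) :=
    fun t ht => (isCompact_Icc.image_of_continuousOn (hcont1 t ht)).bddAbove
  have hu := (isCompact_Icc.prod isCompact_Icc).uniformContinuousOn_of_continuous hh
  rw [Metric.uniformContinuousOn_iff] at hu
  rw [Metric.continuousOn_iff]
  intro a ha ε hε
  obtain ⟨δ, hδ, hδ'⟩ := hu (ε / 2) (by linarith)
  refine ⟨δ, hδ, ?_⟩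
  intro b hb hdist
  have key : ∀ p ∈ Set.Icc a0 abar, ∀ q ∈ Set.Icc a0 abar, dist p q < δ →
      sSup (h p '' Set.Icc a0 p) ≤ sSup (h q '' Set.Icc a0 q) + ε / 2 := by
    intro p hp q hq hpq
    apply csSup_le (hne p hp)
    rintro z ⟨a'', ha'', rfl⟩
    set t := min a'' q with ht
    have htq : t ∈ Set.Icc a0 q := ⟨le_min ha''.1 hq.1, min_le_right _ _⟩
    have hmem1 : (p, a'') ∈ Set.Icc a0 abar ×ˢ Set.Icc a0 abar :=
      Set.mk_mem_prod hp ⟨ha''.1, ha''.2.trans hp.2⟩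
    have hmem2 : (q, t) ∈ Set.Icc a0 abar ×ˢ Set.Icc a0 abar :=
      Set.mk_mem_prod hq ⟨htq.1, htq.2.trans hq.2⟩
    have hdist2 : dist ((p, a'') : ℝ × ℝ) (q, t) < δ := by
      rw [Prod.dist_eq]
      refine max_lt hpq ?_
      rcases le_total a'' q with hc | hc
      · simp [ht, min_eq_left hc, hδ]
      · have : t = q := min_eq_right hc
        rw [this, Real.dist_eq]
        rw [Real.dist_eq] at hpq
        have h1 : a'' ≤ p := ha''.2
        have h2 : a0 ≤ q := hq.1
        rw [abs_lt] at hpq ⊢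
        constructor <;> [linarith [hpq.1, hpq.2]; linarith [hpq.1, hpq.2]]
    have hclose := hδ' _ hmem1 _ hmem2 hdist2
    rw [Real.dist_eq, abs_lt] at hclose
    have hle : h q t ≤ sSup (h q '' Set.Icc a0 q) :=
      le_csSup (hbdd q hq) (Set.mem_image_of_mem _ htq)
    simp only at hclose
    linarith [hclose.2]
  have k1 := key b hb a ha hdist
  have k2 := key a ha b hb (by rwa [dist_comm])
  rw [Real.dist_eq, abs_lt]
  constructor <;> linarith

end Aux

/-- Incentive attenuation: under ranked incentives, if `r(a_F) ≻_AI r(a₀)` for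
every maximizer `a_F` of `U_F`, then for every maximizer `a_F` of `U_F` and every maximizer
`a_P` of `U_0` one has `r(a_P) ≽_AI r(a_F)`, i.e. `∂₁u_A(a,r(a_F)) ≤ ∂₁u_A(a,r(a_P))` for
all `a ∈ A`. -/
theorem stmt16 (a0 abar rlo rhi : ℝ) (hA : a0 < abar) (hR : rlo < rhi)
    (uA uO uP : ℝ → ℝ → ℝ)
    (huA : ContDiff ℝ 2 fun p : ℝ × ℝ => uA p.1 p.2)
    (huO : ContDiff ℝ 2 fun p : ℝ × ℝ => uO p.1 p.2)
    (huP : ContDiff ℝ 2 fun p : ℝ × ℝ => uP p.1 p.2)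
    (hconc : ∀ a ∈ Set.Icc a0 abar, StrictConcaveOn ℝ (Set.Icc rlo rhi) (fun r => uO a r))
    (d1 : ℝ → ℝ → ℝ)
    (hd1 : ∀ a r : ℝ, HasDerivAt (fun x => uA x r) (d1 a r) a)
    (hRI : RankedIncentives d1 (Set.Icc a0 abar) (Set.Icc rlo rhi))
    (rBR : ℝ → ℝ)
    (hrBR : ∀ a ∈ Set.Icc a0 abar, rBR a ∈ Set.Icc rlo rhi ∧
      ∀ r' ∈ Set.Icc rlo rhi, r' ≠ rBR a → uO a r' < uO a (rBR a))
    (hstrict : ∀ aF ∈ Set.Icc a0 abar,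
      IsMaxOn (UFval d1 uP rBR a0) (Set.Icc a0 abar) aF →
      succAI d1 (Set.Icc a0 abar) (rBR aF) (rBR a0)) :
    ∀ aF ∈ Set.Icc a0 abar, IsMaxOn (UFval d1 uP rBR a0) (Set.Icc a0 abar) aF →
    ∀ aP ∈ Set.Icc a0 abar, IsMaxOn (U0val d1 uP rBR a0) (Set.Icc a0 abar) aP →
      succeqAI d1 (Set.Icc a0 abar) (rBR aP) (rBR aF) := by
  intro aF haF maxF aP haP maxP
  by_contra hnot
  have ha0 : a0 ∈ Set.Icc a0 abar := Set.left_mem_Icc.2 hA.le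
  have hRF : rBR aF ∈ Set.Icc rlo rhi := (hrBR aF haF).1
  have hRP : rBR aP ∈ Set.Icc rlo rhi := (hrBR aP haP).1
  have hR0 : rBR a0 ∈ Set.Icc rlo rhi := (hrBR a0 ha0).1
  have hge : succeqAI d1 (Set.Icc a0 abar) (rBR aF) (rBR aP) :=
    (hRI.1 _ hRF _ hRP).resolve_right hnot
  have hlt : ∀ a ∈ Set.Icc a0 abar, d1 a (rBR aP) < d1 a (rBR aF) :=
    hRI.2 _ hRF _ hRP ⟨hge, hnot⟩
  have hsF := hstrict aF haF maxF
  have hlt0 : ∀ a ∈ Set.Icc a0 abar, d1 a (rBR a0) < d1 a (rBR aF) :=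
    hRI.2 _ hRF _ hR0 hsF
  have haF0 : a0 < aF := by
    rcases lt_or_eq_of_le haF.1 with h | h
    · exact h
    · exfalso; apply hsF.2; rw [← h]; exact fun a _ => le_refl _
  -- continuity facts
  have hd1c : Continuous fun p : ℝ × ℝ => d1 p.1 p.2 := aux_d1_cont uA huA d1 hd1
  have hrc : ContinuousOn rBR (Set.Icc a0 abar) :=
    aux_argmax_cont uO huO.continuous rBR hrBR
  have hhc : ContinuousOn (fun p : ℝ × ℝ => d1 p.1 (rBR p.2))
      (Set.Icc a0 abar ×ˢ Set.Icc a0 abar) := by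
    exact hd1c.comp_continuousOn
      (continuousOn_fst.prodMk (hrc.comp continuousOn_snd fun p hp => hp.2))
  set M : ℝ → ℝ := fun a' => sSup ((fun a'' => d1 a' (rBR a'')) '' Set.Icc a0 a') with hM
  have hMc : ContinuousOn M (Set.Icc a0 abar) :=
    aux_sSup_cont hA.le (fun x y => d1 x (rBR y)) hhc
  have hsub : ∀ x ∈ Set.Icc a0 abar, ∀ y ∈ Set.Icc a0 abar,
      Set.uIcc x y ⊆ Set.Icc a0 abar := by
    intro x hx y hy
    rw [← Set.uIcc_of_le hA.le]
    exact Set.uIcc_subset_uIcc (by rwa [Set.uIcc_of_le hA.le]) (by rwa [Set.uIcc_of_le hA.le])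
  have hcc : ∀ a : ℝ, Continuous fun a' => d1 a' (rBR a) :=
    fun a => hd1c.comp (continuous_id.prodMk continuous_const)
  set g : ℝ → ℝ → ℝ := fun a a' => d1 a' (rBR a) - min (M a') (d1 a' (rBR a)) with hg
  have hgc : ∀ a : ℝ, ContinuousOn (g a) (Set.Icc a0 abar) := fun a =>
    ((hcc a).continuousOn).sub (hMc.inf ((hcc a).continuousOn))
  have hgint : ∀ a : ℝ, ∀ x ∈ Set.Icc a0 abar, ∀ y ∈ Set.Icc a0 abar,
      IntervalIntegrable (g a) volume x y := fun a x hx y hy =>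
    ((hgc a).mono (hsub x hx y hy)).intervalIntegrable
  have hgnonneg : ∀ a a' : ℝ, 0 ≤ g a a' := fun a a' =>
    sub_nonneg.2 (min_le_right _ _)
  -- UF = U0 - ∫ g
  have hdiff : ∀ a ∈ Set.Icc a0 abar,
      UFval d1 uP rBR a0 a = U0val d1 uP rBR a0 a - ∫ a' in a0..a, g a a' := by
    intro a ha
    have h1 : IntervalIntegrable (fun a' => d1 a' (rBR a)) volume a0 a :=
      (hcc a).intervalIntegrable a0 a
    have h2 : IntervalIntegrable (g a) volume a0 a := hgint a a0 ha0 a ha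
    have h3 : (∫ a' in a0..a, (d1 a' (rBR a) - g a a'))
        = (∫ a' in a0..a, d1 a' (rBR a)) - ∫ a' in a0..a, g a a' :=
      intervalIntegral.integral_sub h1 h2
    have h4 : (fun a' => d1 a' (rBR a) - g a a')
        = fun a' => min (M a') (d1 a' (rBR a)) := by
      funext a'; simp only [hg]; ring
    rw [h4] at h3
    simp only [UFval, U0val]
    have h5 : ∀ a' : ℝ, sSup ((fun a'' => d1 a' (rBR a'')) '' Set.Icc a0 a') = M a' :=
      fun _ => rfl
    simp only [h5]
    rw [h3]
    ring
  have h1 : UFval d1 uP rBR a0 aP ≤ UFval d1 uP rBR a0 aF := maxF haP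
  have h2 : U0val d1 uP rBR a0 aF ≤ U0val d1 uP rBR a0 aP := maxP haF
  have eF := hdiff aF haF
  have eP := hdiff aP haP
  have hIFIP : (∫ a' in a0..aF, g aF a') ≤ ∫ a' in a0..aP, g aP a' := by linarith
  -- pointwise comparison
  have hgle : ∀ a' ∈ Set.Icc a0 abar, g aP a' ≤ g aF a' := by
    intro a' ha'
    have := hlt a' ha'
    simp only [hg, min_def]
    split_ifs <;> linarith
  have hbdd : ∀ a' ∈ Set.Icc a0 abar,
      BddAbove ((fun a'' => d1 a' (rBR a'')) '' Set.Icc a0 a') := by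
    intro a' ha'
    apply (isCompact_Icc.image_of_continuousOn ?_).bddAbove
    refine hhc.comp ((continuous_const.prodMk continuous_id).continuousOn) ?_
    intro x hx
    exact Set.mk_mem_prod ha' ⟨hx.1, hx.2.trans ha'.2⟩
  have hleM : ∀ a' ∈ Set.Icc a0 abar, ∀ a'' ∈ Set.Icc a0 a',
      d1 a' (rBR a'') ≤ M a' := fun a' ha' a'' ha'' =>
    le_csSup (hbdd a' ha') (Set.mem_image_of_mem _ ha'')
  have hgP0 : ∀ a' ∈ Set.Icc a0 abar, aF ≤ a' → g aP a' = 0 := by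
    intro a' ha' hge'
    have hM' : d1 a' (rBR aP) ≤ M a' :=
      le_trans (hlt a' ha').le (hleM a' ha' aF ⟨haF.1, hge'⟩)
    simp [hg, min_eq_right hM']
  -- step 1 : ∫_{a0}^{aP} g aP ≤ ∫_{a0}^{aF} g aP
  have hstep1 : (∫ a' in a0..aP, g aP a') ≤ ∫ a' in a0..aF, g aP a' := by
    rcases le_total aP aF with hc | hc
    · have hadd := intervalIntegral.integral_add_adjacent_intervals
        (hgint aP a0 ha0 aP haP) (hgint aP aP haP aF haF)
      have hnn : 0 ≤ ∫ a' in aP..aF, g aP a' :=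
        intervalIntegral.integral_nonneg hc fun u _ => hgnonneg aP u
      linarith
    · have hadd := intervalIntegral.integral_add_adjacent_intervals
        (hgint aP a0 ha0 aF haF) (hgint aP aF haF aP haP)
      have hz : (∫ a' in aF..aP, g aP a') = 0 := by
        rw [intervalIntegral.integral_congr (g := fun _ => (0 : ℝ)) ?_,
          intervalIntegral.integral_zero]
        intro u hu
        rw [Set.uIcc_of_le hc] at hu
        exact hgP0 u ⟨le_trans haF.1 hu.1, hu.2.trans haP.2⟩ hu.1
      linarith
  -- find b with M < d1 (rBR aF) on [a0, b]
  have hMa0 : M a0 = d1 a0 (rBR a0) := by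
    simp only [hM, Set.Icc_self, Set.image_singleton, csSup_singleton]
  have hψc : ContinuousOn (fun a' => d1 a' (rBR aF) - M a') (Set.Icc a0 abar) :=
    ((hcc aF).continuousOn).sub hMc
  have hψ0 : 0 < d1 a0 (rBR aF) - M a0 := by
    rw [hMa0]; linarith [hlt0 a0 ha0]
  have hev : ∀ᶠ x in 𝓝[Set.Icc a0 abar] a0, 0 < d1 x (rBR aF) - M x :=
    (hψc a0 ha0).eventually (eventually_gt_nhds hψ0)
  rw [eventually_iff, Metric.mem_nhdsWithin_iff] at hev
  obtain ⟨δ, hδ, hδ'⟩ := hev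
  set b : ℝ := min (a0 + δ / 2) aF with hb
  have hab : a0 < b := lt_min (by linarith) haF0
  have hbF : b ≤ aF := min_le_right _ _
  have hbA : b ∈ Set.Icc a0 abar := ⟨hab.le, hbF.trans haF.2⟩
  have hMlt : ∀ a' ∈ Set.Icc a0 b, M a' < d1 a' (rBR aF) := by
    intro a' ha'
    have h1 : a' ∈ Set.Icc a0 abar := ⟨ha'.1, ha'.2.trans hbA.2⟩
    have h2 : dist a' a0 < δ := by
      rw [Real.dist_eq, abs_lt]
      constructor
      · linarith [ha'.1]
      · have : a' ≤ a0 + δ / 2 := ha'.2.trans (min_le_left _ _)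
        linarith
    have := hδ' ⟨Metric.mem_ball.2 h2, h1⟩
    simp only [Set.mem_setOf_eq] at this
    linarith
  -- strict inequality
  have hdiffint : ∀ x ∈ Set.Icc a0 abar, ∀ y ∈ Set.Icc a0 abar,
      IntervalIntegrable (fun a' => g aF a' - g aP a') volume x y := fun x hx y hy =>
    (hgint aF x hx y hy).sub (hgint aP x hx y hy)
  have hpos : 0 < ∫ a' in a0..b, (g aF a' - g aP a') := by
    apply intervalIntegral.intervalIntegral_pos_of_pos_on (hdiffint a0 ha0 b hbA) ?_ hab
    intro u hu
    have huA : u ∈ Set.Icc a0 abar := ⟨hu.1.le, hu.2.le.trans hbA.2⟩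
    have h1 := hMlt u ⟨hu.1.le, hu.2.le⟩
    have h2 := hlt u huA
    simp only [hg, min_def]
    split_ifs <;> linarith
  have hnn2 : 0 ≤ ∫ a' in b..aF, (g aF a' - g aP a') := by
    apply intervalIntegral.integral_nonneg hbF
    intro u hu
    have huA : u ∈ Set.Icc a0 abar := ⟨hab.le.trans hu.1, hu.2.trans haF.2⟩
    exact sub_nonneg.2 (hgle u huA)
  have hadd2 := intervalIntegral.integral_add_adjacent_intervals
    (hdiffint a0 ha0 b hbA) (hdiffint b hbA aF haF)
  have hsplit : (∫ a' in a0..aF, (g aF a' - g aP a'))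
      = (∫ a' in a0..aF, g aF a') - ∫ a' in a0..aF, g aP a' :=
    intervalIntegral.integral_sub (hgint aF a0 ha0 aF haF) (hgint aP a0 ha0 aF haF)
  linarith
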